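/- Let μ = 1 (cubic NLS), α < 0, N a positive integer, and ω > α²/N². For integers 0 ≤ j < j' ≤ ⌊(N−1)/2⌋ (so that both Ψʲ_ω and Ψ^{j'}_ω exist when additionally ω > α²/(2j'−N)²), the energies are strictly ordered: E[Ψʲ_ω] < E[Ψ^{j'}_ω]. That is, for attractive vertex interaction the energy of the stationary states at fixed ω strictly increases with the number of bumps j. -/

import Mathlib

open MeasureTheory Set

/-- The inverse hyperbolic tangent. -/
noncomputable def arctanh (x : ℝ) : ℝ := (1 / 2) * Real.log ((1 + x) / (1 - x))


open Filter Real Topology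

lemma hasDerivAt_tanhsc (t : ℝ) :
    HasDerivAt (fun u => Real.sinh u / Real.cosh u) (1 / Real.cosh t ^ 2) t := by
  have h := (Real.hasDerivAt_sinh t).div (Real.hasDerivAt_cosh t) (Real.cosh_pos t).ne'
  refine h.congr_deriv (Eq.symm ?_)
  have h1 := Real.cosh_sq_sub_sinh_sq t
  have hc := (Real.cosh_pos t).ne'
  field_simp
  nlinarith [h1]

lemma tanh_lt_one' (t : ℝ) : Real.sinh t / Real.cosh t < 1 := by
  rw [div_lt_one (Real.cosh_pos t)]
  nlinarith [Real.cosh_sub_sinh t, Real.exp_pos (-t)]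

lemma neg_one_lt_tanh' (t : ℝ) : -1 < Real.sinh t / Real.cosh t := by
  rw [lt_div_iff₀ (Real.cosh_pos t)]
  nlinarith [Real.cosh_add_sinh t, Real.exp_pos t]

lemma tanh_tendsto : Tendsto (fun t => Real.sinh t / Real.cosh t) atTop (𝓝 1) := by
  have h : ∀ t : ℝ, Real.sinh t / Real.cosh t
      = (1 - Real.exp (-2 * t)) / (1 + Real.exp (-2 * t)) := by
    intro t
    rw [Real.sinh_eq, Real.cosh_eq]
    have h1 : Real.exp (-t) = Real.exp (-2 * t) * Real.exp t := by
      rw [← Real.exp_add]; ring_nf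
    have h2 := (Real.exp_pos t).ne'
    have h3 := (Real.exp_pos (-2 * t))
    have h4 : (0:ℝ) < Real.exp t + Real.exp (-t) := by positivity
    rw [h1]
    field_simp
  simp only [h]
  have he : Tendsto (fun t : ℝ => Real.exp (-2 * t)) atTop (𝓝 0) := by
    apply Real.tendsto_exp_atBot.comp
    exact Tendsto.const_mul_atTop_of_neg (by norm_num) tendsto_id
  have hnum : Tendsto (fun t : ℝ => 1 - Real.exp (-2 * t)) atTop (𝓝 (1 - 0)) :=
    tendsto_const_nhds.sub he
  have hden : Tendsto (fun t : ℝ => 1 + Real.exp (-2 * t)) atTop (𝓝 (1 + 0)) :=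
    tendsto_const_nhds.add he
  have := hnum.div hden (by norm_num)
  simp only [sub_zero, add_zero, div_one] at this; exact this

lemma tanh_arctanh (c : ℝ) (h1 : -1 < c) (h2 : c < 1) :
    Real.sinh (arctanh c) / Real.cosh (arctanh c) = c := by
  set y := arctanh c with hy
  have hr : 0 < (1 + c) / (1 - c) := div_pos (by linarith) (by linarith)
  have he : Real.exp (2 * y) = (1 + c) / (1 - c) := by
    rw [hy, arctanh, show 2 * (1 / 2 * Real.log ((1 + c) / (1 - c))) = Real.log ((1+c)/(1-c)) by ring, Real.exp_log hr]
  have hey := (Real.exp_pos y).ne'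
  have hstep : Real.sinh y / Real.cosh y = (Real.exp (2*y) - 1) / (Real.exp (2*y) + 1) := by
    rw [Real.sinh_eq, Real.cosh_eq, show (2:ℝ) * y = y + y by ring, Real.exp_add,
      Real.exp_neg]
    have h4 : (0:ℝ) < Real.exp y * Real.exp y + 1 := by positivity
    have h5 : (0:ℝ) < Real.exp y + (Real.exp y)⁻¹ := by positivity
    field_simp
  rw [hstep, he]
  have h3 : (1:ℝ) - c ≠ 0 := by linarith
  field_simp
  ring

/-- The cubic (μ = 1) soliton profile `φ_{ω,a}(x) = √(2ω) sech(√ω (x − a))`. -/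
noncomputable def cubicProfile (ω a : ℝ) (x : ℝ) : ℝ :=
  Real.sqrt (2 * ω) * (1 / Real.cosh (Real.sqrt ω * (x - a)))


lemma profile_hasDerivAt (ω a x : ℝ) :
    HasDerivAt (cubicProfile ω a)
      (Real.sqrt (2 * ω) * (-(Real.sinh (Real.sqrt ω * (x - a)) * Real.sqrt ω)
        / Real.cosh (Real.sqrt ω * (x - a)) ^ 2)) x := by
  set s := Real.sqrt ω
  have h1 : HasDerivAt (fun x : ℝ => s * (x - a)) s x := by
    simpa using ((hasDerivAt_id x).sub_const a).const_mul s
  have h2 : HasDerivAt (fun x : ℝ => Real.cosh (s * (x - a)))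
      (Real.sinh (s * (x - a)) * s) x := (Real.hasDerivAt_cosh _).comp x h1
  have h3 := h2.inv (Real.cosh_pos _).ne'
  have h4 := h3.const_mul (Real.sqrt (2 * ω))
  have : cubicProfile ω a = fun x => Real.sqrt (2 * ω) * (Real.cosh (s * (x - a)))⁻¹ := by
    funext y; simp [cubicProfile, one_div, s]
  rw [this]
  exact h4

lemma affine_tendsto (s a : ℝ) (hs : 0 < s) :
    Tendsto (fun x : ℝ => s * (x - a)) atTop atTop := by
  apply Tendsto.const_mul_atTop hs
  simpa [sub_eq_add_neg] using tendsto_atTop_add_const_right atTop (-a) tendsto_id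

lemma integral_energy_piece (ω a : ℝ) (hω : 0 < ω) :
    (∫ x in Ioi (0 : ℝ),
        ((deriv (cubicProfile ω a) x) ^ 2 / 2 - (cubicProfile ω a x) ^ 4 / 4))
    = ω * Real.sqrt ω * (-(1/3)
        + Real.sinh (Real.sqrt ω * (0 - a)) / Real.cosh (Real.sqrt ω * (0 - a))
        - 2/3 * (Real.sinh (Real.sqrt ω * (0 - a)) / Real.cosh (Real.sqrt ω * (0 - a))) ^ 3) := by
  set s := Real.sqrt ω with hsdef
  have hs : 0 < s := Real.sqrt_pos.mpr hω
  have hs2 : s ^ 2 = ω := Real.sq_sqrt hω.le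
  have h2ω : Real.sqrt (2 * ω) ^ 2 = 2 * ω := Real.sq_sqrt (by linarith)
  set T : ℝ → ℝ := fun x => Real.sinh (s * (x - a)) / Real.cosh (s * (x - a)) with hT_def
  have hT : ∀ x, HasDerivAt T (s * (1 / Real.cosh (s * (x - a)) ^ 2)) x := by
    intro x
    have h1 : HasDerivAt (fun x : ℝ => s * (x - a)) s x := by
      simpa using ((hasDerivAt_id x).sub_const a).const_mul s
    have h2 := (hasDerivAt_tanhsc (s * (x - a))).comp x h1
    have h3 : HasDerivAt T (1 / Real.cosh (s * (x - a)) ^ 2 * s) x := h2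
    convert h3 using 1
    ring
  -- f1 and f2
  set f1 : ℝ → ℝ := fun x => ω * ω * (Real.sinh (s * (x - a)) ^ 2 / Real.cosh (s * (x - a)) ^ 4)
    with hf1_def
  set f2 : ℝ → ℝ := fun x => ω * ω * (1 / Real.cosh (s * (x - a)) ^ 4) with hf2_def
  have hg1 : ∀ x, HasDerivAt (fun x => ω * s / 3 * (T x) ^ 3) (f1 x) x := by
    intro x
    have := ((hT x).pow 3).const_mul (ω * s / 3)
    refine this.congr_deriv (Eq.symm ?_)
    have hc := (Real.cosh_pos (s * (x - a))).ne'
    simp only [hf1_def, hT_def]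
    rw [← hs2]
    generalize s * (x - a) = u at hc ⊢
    field_simp
    have hi : Real.cosh u ^ 2 * (Real.cosh u)⁻¹ ^ 2 = 1 := by rw [← mul_pow, mul_inv_cancel₀ hc, one_pow]
    linear_combination (-3 * Real.sinh u ^ 2) * hi
  have hg2 : ∀ x, HasDerivAt (fun x => ω * s * (T x - (T x) ^ 3 / 3)) (f2 x) x := by
    intro x
    have := ((hT x).sub (((hT x).pow 3).div_const 3)).const_mul (ω * s)
    refine this.congr_deriv (Eq.symm ?_)
    have hc := (Real.cosh_pos (s * (x - a))).ne'
    have hcs := Real.cosh_sq_sub_sinh_sq (s * (x - a))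
    simp only [hf2_def, hT_def]
    rw [← hs2]
    generalize s * (x - a) = u at hc hcs ⊢
    field_simp
    have hi : Real.cosh u ^ 2 * (Real.cosh u)⁻¹ ^ 2 = 1 := by rw [← mul_pow, mul_inv_cancel₀ hc, one_pow]
    linear_combination (-3) * hcs + 3 * Real.sinh u ^ 2 * hi
  have hTlim : Tendsto T atTop (𝓝 1) := tanh_tendsto.comp (affine_tendsto s a hs)
  have hlim1 : Tendsto (fun x => ω * s / 3 * (T x) ^ 3) atTop (𝓝 (ω * s / 3)) := by
    have := ((hTlim.pow 3).const_mul (ω * s / 3))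
    simpa using this
  have hlim2 : Tendsto (fun x => ω * s * (T x - (T x) ^ 3 / 3)) atTop (𝓝 (ω * s * (2 / 3))) := by
    have := ((hTlim.sub ((hTlim.pow 3).div_const 3)).const_mul (ω * s))
    convert this using 2
    norm_num
  have hpos1 : ∀ x ∈ Ioi (0:ℝ), 0 ≤ f1 x := by
    intro x _
    have := Real.cosh_pos (s * (x - a))
    positivity
  have hpos2 : ∀ x ∈ Ioi (0:ℝ), 0 ≤ f2 x := by
    intro x _
    have := Real.cosh_pos (s * (x - a))
    positivity
  have hint1 : IntegrableOn f1 (Ioi (0:ℝ)) :=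
    integrableOn_Ioi_deriv_of_nonneg' (fun x _ => hg1 x) hpos1 hlim1
  have hint2 : IntegrableOn f2 (Ioi (0:ℝ)) :=
    integrableOn_Ioi_deriv_of_nonneg' (fun x _ => hg2 x) hpos2 hlim2
  have e1 : (∫ x in Ioi (0:ℝ), f1 x) = ω * s / 3 - ω * s / 3 * (T 0) ^ 3 :=
    integral_Ioi_of_hasDerivAt_of_nonneg' (fun x _ => hg1 x) hpos1 hlim1
  have e2 : (∫ x in Ioi (0:ℝ), f2 x) = ω * s * (2 / 3) - ω * s * (T 0 - (T 0) ^ 3 / 3) :=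
    integral_Ioi_of_hasDerivAt_of_nonneg' (fun x _ => hg2 x) hpos2 hlim2
  have hfe : ∀ x, (deriv (cubicProfile ω a) x) ^ 2 / 2 - (cubicProfile ω a x) ^ 4 / 4
      = f1 x - f2 x := by
    intro x
    rw [(profile_hasDerivAt ω a x).deriv]
    have hc := (Real.cosh_pos (s * (x - a))).ne'
    simp only [hf1_def, hf2_def, cubicProfile, ← hsdef]
    have e1 : (Real.sqrt (2 * ω) * (-(Real.sinh (s * (x - a)) * s) / Real.cosh (s * (x - a)) ^ 2)) ^ 2
        = 2 * ω * ((Real.sinh (s * (x - a)) * s) / Real.cosh (s * (x - a)) ^ 2) ^ 2 := by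
      rw [mul_pow, h2ω]; ring
    have e2 : (Real.sqrt (2 * ω) * (1 / Real.cosh (s * (x - a)))) ^ 4
        = (2 * ω) ^ 2 * (1 / Real.cosh (s * (x - a))) ^ 4 := by
      rw [mul_pow, show Real.sqrt (2 * ω) ^ 4 = ((2:ℝ) * ω) ^ 2 by
        rw [show (4:ℕ) = 2 * 2 from rfl, pow_mul, h2ω]]
    rw [e1, e2, ← hs2]
    field_simp
    ring
  calc (∫ x in Ioi (0 : ℝ),
        ((deriv (cubicProfile ω a) x) ^ 2 / 2 - (cubicProfile ω a x) ^ 4 / 4))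
      = ∫ x in Ioi (0:ℝ), (f1 x - f2 x) := by simp only [hfe]
    _ = (∫ x in Ioi (0:ℝ), f1 x) - ∫ x in Ioi (0:ℝ), f2 x := integral_sub hint1 hint2
    _ = _ := by
        rw [e1, e2]
        have : T 0 = Real.sinh (s * (0 - a)) / Real.cosh (s * (0 - a)) := rfl
        rw [this]
        ring

/-- The energy `E[Ψʲ_ω]` of the cubic stationary state with `j` bumps and `N − j`
tails on the `N`-edge star graph with delta vertex of strength `α`:
`E[Ψ] = Σᵢ ∫₀^∞ (|ψᵢ'|²/2 − |ψᵢ|⁴/4) dx + (α/2)|ψ₁(0)|²`. -/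
noncomputable def cubicStateEnergy (α ω : ℝ) (N j : ℕ) : ℝ :=
  let aj : ℝ := 1 / Real.sqrt ω * arctanh (α / ((2 * (j : ℝ) - N) * Real.sqrt ω))
  (j : ℝ) * (∫ x in Ioi (0 : ℝ),
      ((deriv (cubicProfile ω aj) x) ^ 2 / 2 - (cubicProfile ω aj x) ^ 4 / 4))
    + ((N : ℝ) - j) * (∫ x in Ioi (0 : ℝ),
      ((deriv (cubicProfile ω (-aj)) x) ^ 2 / 2 - (cubicProfile ω (-aj) x) ^ 4 / 4))
    + α / 2 * (cubicProfile ω aj 0) ^ 2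


lemma energy_closed_form (α ω : ℝ) (N j : ℕ) (hω : 0 < ω)
    (hm : 2 * (j : ℝ) - N ≠ 0)
    (h1 : -1 < α / ((2 * (j : ℝ) - N) * Real.sqrt ω))
    (h2 : α / ((2 * (j : ℝ) - N) * Real.sqrt ω) < 1) :
    cubicStateEnergy α ω N j
      = -((N : ℝ) / 3) * (ω * Real.sqrt ω) - α ^ 3 / (3 * (2 * (j : ℝ) - N) ^ 2) := by
  have hs : 0 < Real.sqrt ω := Real.sqrt_pos.mpr hω
  have hs2 : Real.sqrt ω ^ 2 = ω := Real.sq_sqrt hω.le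
  set s := Real.sqrt ω with hsdef
  set c : ℝ := α / ((2 * (j : ℝ) - N) * s) with hc
  set y : ℝ := arctanh c with hy
  have htanh : Real.sinh y / Real.cosh y = c := tanh_arctanh c h1 h2
  have hchy := (Real.cosh_pos y).ne'
  rw [cubicStateEnergy]
  simp only [← hsdef, ← hc, ← hy]
  rw [integral_energy_piece ω _ hω, integral_energy_piece ω _ hω]
  have ha1 : s * ((0:ℝ) - 1 / s * y) = -y := by field_simp; ring
  have ha2 : s * ((0:ℝ) - -(1 / s * y)) = y := by field_simp; ring
  rw [ha1, ha2, Real.sinh_neg, Real.cosh_neg]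
  have hub : -Real.sinh y / Real.cosh y = -c := by rw [neg_div, htanh]
  rw [hub, htanh]
  have hφ : cubicProfile ω (1 / s * y) 0 ^ 2 = 2 * ω * (1 - c ^ 2) := by
    rw [cubicProfile, ← hsdef, ha1, Real.cosh_neg, mul_pow,
      Real.sq_sqrt (by linarith : (0:ℝ) ≤ 2 * ω)]
    have : (1 / Real.cosh y) ^ 2 = 1 - c ^ 2 := by
      rw [← htanh]
      have hcs := Real.cosh_sq_sub_sinh_sq y
      field_simp
      linarith [hcs]
    rw [this]
  rw [hφ]
  have hα : α = c * ((2 * (j : ℝ) - N) * s) := by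
    rw [hc]; field_simp
  rw [hα, ← hs2]
  simp only [Real.sqrt_sq hs.le]
  have hms : (2 * (j : ℝ) - N) * s ≠ 0 := mul_ne_zero hm hs.ne'
  field_simp
  ring

theorem stmt_8 (α : ℝ) (hα : α < 0) (N : ℕ) (hN : 0 < N)
    (ω : ℝ) (hω : ω > α ^ 2 / (N : ℝ) ^ 2)
    (j j' : ℕ) (hjj' : j < j') (hj' : j' ≤ (N - 1) / 2)
    (hω' : ω > α ^ 2 / (2 * (j' : ℝ) - N) ^ 2) :
    -- for the attractive vertex the energies at fixed `ω` strictly increase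
    -- with the number of bumps
    cubicStateEnergy α ω N j < cubicStateEnergy α ω N j' := by
  have hα2 : 0 < α ^ 2 := by nlinarith
  have hNR : (0:ℝ) < N := by exact_mod_cast hN
  have hω0 : 0 < ω := lt_trans (div_pos hα2 (by positivity)) hω
  have hs : 0 < Real.sqrt ω := Real.sqrt_pos.mpr hω0
  have hs2 : Real.sqrt ω ^ 2 = ω := Real.sq_sqrt hω0.le
  have hNat : 2 * j' + 1 ≤ N := by omega
  have hm' : 2 * (j' : ℝ) - N ≤ -1 := by
    have : ((2 * j' + 1 : ℕ) : ℝ) ≤ N := by exact_mod_cast Nat.cast_le.mpr hNat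
    push_cast at this
    linarith
  have hjr : (j : ℝ) + 1 ≤ j' := by exact_mod_cast hjj'
  have hm : 2 * (j : ℝ) - N ≤ 2 * (j' : ℝ) - N - 2 := by linarith
  have hm'0 : 2 * (j' : ℝ) - N ≠ 0 := by linarith
  have hm0 : 2 * (j : ℝ) - N ≠ 0 := by linarith
  have hsq : (2 * (j' : ℝ) - N) ^ 2 < (2 * (j : ℝ) - N) ^ 2 := by nlinarith
  have hωj : ω > α ^ 2 / (2 * (j : ℝ) - N) ^ 2 := by
    have h1 : α ^ 2 / (2 * (j : ℝ) - N) ^ 2 < α ^ 2 / (2 * (j' : ℝ) - N) ^ 2 :=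
      div_lt_div_of_pos_left hα2 (by positivity) hsq
    linarith
  have key : ∀ m : ℝ, m ≠ 0 → ω > α ^ 2 / m ^ 2 →
      -1 < α / (m * Real.sqrt ω) ∧ α / (m * Real.sqrt ω) < 1 := by
    intro m hmne hωm
    have hm2 : 0 < m ^ 2 := by positivity
    have hlt : α ^ 2 < m ^ 2 * ω := by
      have := (div_lt_iff₀ hm2).mp hωm
      linarith
    have hsq1 : (α / (m * Real.sqrt ω)) ^ 2 < 1 := by
      rw [div_pow, div_lt_one (by positivity)]
      calc α ^ 2 < m ^ 2 * ω := hlt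
        _ = (m * Real.sqrt ω) ^ 2 := by rw [mul_pow, hs2]
    have := (sq_lt_one_iff_abs_lt_one _).mp hsq1
    exact abs_lt.mp this
  obtain ⟨hj1, hj2⟩ := key _ hm0 hωj
  obtain ⟨hj1', hj2'⟩ := key _ hm'0 hω'
  rw [energy_closed_form α ω N j hω0 hm0 hj1 hj2,
    energy_closed_form α ω N j' hω0 hm'0 hj1' hj2']
  have hα3 : α ^ 3 < 0 := by nlinarith
  have h2 : α ^ 3 / (3 * (2 * (j' : ℝ) - N) ^ 2) < α ^ 3 / (3 * (2 * (j : ℝ) - N) ^ 2) := by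
    rw [div_lt_div_iff₀ (by positivity) (by positivity)]
    nlinarith [mul_pos (show (0:ℝ) < -α ^ 3 by linarith)
      (show (0:ℝ) < (2 * (j : ℝ) - N) ^ 2 - (2 * (j' : ℝ) - N) ^ 2 by linarith)]
  linarith
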